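/- Two trace-free symmetric real 3×3 matrices are conjugate under SO(3) if and only if u₁ and u₂ agree on them, where u₁(X) = tr(X²) and u₂(X) = det X. Equivalently, the level sets of (u₁, u₂) on trace-free symmetric 3×3 matrices are single SO(3)-orbits. -/

import Mathlib

open Matrix

section Aux

open Polynomial

private lemma map_univ_perm' {n : ℕ} (h : Fin n → ℝ) (σ : Equiv.Perm (Fin n)) :
    Multiset.map (h ∘ σ) Finset.univ.val = Multiset.map h Finset.univ.val := by
  rw [← Multiset.map_map]
  congr 1
  have := congrArg Finset.val (Finset.map_univ_equiv σ)
  rwa [Finset.map_val, Equiv.coe_toEmbedding] at this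

private lemma coe_ofFn' {n : ℕ} (h : Fin n → ℝ) :
    (List.ofFn h : Multiset ℝ) = Multiset.map h Finset.univ.val :=
  (Fin.univ_val_map h).symm

private lemma exists_comp_perm' {n : ℕ} (f g : Fin n → ℝ)
    (h : Multiset.map f Finset.univ.val = Multiset.map g Finset.univ.val) :
    ∃ σ : Equiv.Perm (Fin n), f ∘ σ = g := by
  set sf := Tuple.sort f
  set sg := Tuple.sort g
  have h1 : Monotone (f ∘ sf) := Tuple.monotone_sort f
  have h2 : Monotone (g ∘ sg) := Tuple.monotone_sort g
  have hperm : (List.ofFn (f ∘ sf)).Perm (List.ofFn (g ∘ sg)) := by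
    rw [← Multiset.coe_eq_coe, coe_ofFn', coe_ofFn', map_univ_perm', map_univ_perm']
    exact h
  have heq : f ∘ sf = g ∘ sg :=
    List.ofFn_injective (List.Perm.eq_of_sortedLE h1.sortedLE_ofFn h2.sortedLE_ofFn hperm)
  refine ⟨sg.symm.trans sf, funext fun x => ?_⟩
  have := congrFun heq (sg.symm x)
  simpa using this

private lemma cubic_id' (a b c : ℝ) :
    (X - C a) * (X - C b) * (X - C c) =
      X ^ 3 - C (a + b + c) * X ^ 2 + C (a * b + b * c + c * a) * X - C (a * b * c) := by
  simp only [map_add, _root_.map_mul]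
  ring

private lemma prod_to_ms' (l : Fin 3 → ℝ) :
    ((Multiset.map l Finset.univ.val).map fun a => X - C a).prod =
      ∏ i, (X - C (l i)) := by
  rw [Multiset.map_map]
  rfl

private lemma eigen_multiset_eq' (lx ly : Fin 3 → ℝ)
    (h1x : lx 0 + lx 1 + lx 2 = 0) (h1y : ly 0 + ly 1 + ly 2 = 0)
    (h2 : lx 0 * lx 0 + lx 1 * lx 1 + lx 2 * lx 2
        = ly 0 * ly 0 + ly 1 * ly 1 + ly 2 * ly 2)
    (h3 : lx 0 * lx 1 * lx 2 = ly 0 * ly 1 * ly 2) :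
    Multiset.map lx Finset.univ.val = Multiset.map ly Finset.univ.val := by
  have he2 : lx 0 * lx 1 + lx 1 * lx 2 + lx 2 * lx 0
      = ly 0 * ly 1 + ly 1 * ly 2 + ly 2 * ly 0 := by
    linear_combination (lx 0 + lx 1 + lx 2) / 2 * h1x - (ly 0 + ly 1 + ly 2) / 2 * h1y
      - (1 / 2) * h2
  have hpoly : (∏ i, (X - C (lx i))) = ∏ i, (X - C (ly i)) := by
    rw [Fin.prod_univ_three, Fin.prod_univ_three, cubic_id', cubic_id', h1x, h1y, he2, h3]
  have h := congrArg Polynomial.roots hpoly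
  rwa [← prod_to_ms', ← prod_to_ms', roots_multiset_prod_X_sub_C,
    roots_multiset_prod_X_sub_C] at h

private lemma orth_mul' {k l : Matrix (Fin 3) (Fin 3) ℝ} (hk : k * kᵀ = 1) (hl : l * lᵀ = 1) :
    (k * l) * (k * l)ᵀ = 1 := by
  rw [transpose_mul, Matrix.mul_assoc, ← Matrix.mul_assoc l, hl, Matrix.one_mul, hk]

private lemma orth_transpose' {k : Matrix (Fin 3) (Fin 3) ℝ} (hk : k * kᵀ = 1) :
    kᵀ * kᵀᵀ = 1 := by
  rw [transpose_transpose]; exact mul_eq_one_comm.mp hk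

private lemma conj_trace' {k A : Matrix (Fin 3) (Fin 3) ℝ} (hk : k * kᵀ = 1) :
    (k * A * kᵀ).trace = A.trace := by
  rw [Matrix.trace_mul_cycle, mul_eq_one_comm.mp hk, Matrix.one_mul]

private lemma conj_sq' {k A : Matrix (Fin 3) (Fin 3) ℝ} (hk : k * kᵀ = 1) :
    (k * A * kᵀ) * (k * A * kᵀ) = k * (A * A) * kᵀ := by
  have h' : kᵀ * k = 1 := mul_eq_one_comm.mp hk
  calc (k * A * kᵀ) * (k * A * kᵀ) = k * (A * (kᵀ * k) * A) * kᵀ := by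
        simp only [Matrix.mul_assoc]
    _ = k * (A * A) * kᵀ := by rw [h', Matrix.mul_one, Matrix.mul_assoc]

private lemma conj_det' {k A : Matrix (Fin 3) (Fin 3) ℝ} (hk : k * kᵀ = 1) :
    (k * A * kᵀ).det = A.det := by
  have h1 : k.det * kᵀ.det = 1 := by rw [← det_mul, hk, det_one]
  rw [det_mul, det_mul]
  rw [det_transpose] at h1 ⊢
  linear_combination A.det * h1

private lemma real_spectral' (X : Matrix (Fin 3) (Fin 3) ℝ) (hX : Xᵀ = X) :
    ∃ (U : Matrix (Fin 3) (Fin 3) ℝ) (l : Fin 3 → ℝ),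
      U * Uᵀ = 1 ∧ X = U * diagonal l * Uᵀ := by
  have hXh : X.IsHermitian := by
    rw [Matrix.IsHermitian, conjTranspose_eq_transpose_of_trivial, hX]
  refine ⟨(hXh.eigenvectorUnitary : Matrix (Fin 3) (Fin 3) ℝ), hXh.eigenvalues, ?_, ?_⟩
  · have := (Matrix.mem_unitaryGroup_iff).mp hXh.eigenvectorUnitary.2
    rwa [star_eq_conjTranspose, conjTranspose_eq_transpose_of_trivial] at this
  · have h := hXh.spectral_theorem
    rwa [Unitary.conjStarAlgAut_apply, star_eq_conjTranspose, conjTranspose_eq_transpose_of_trivial,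
      RCLike.ofReal_real_eq_id, Function.id_comp] at h

private lemma perm_matrix_conj' (σ : Equiv.Perm (Fin 3)) (l : Fin 3 → ℝ) :
    ∃ P : Matrix (Fin 3) (Fin 3) ℝ,
      P * Pᵀ = 1 ∧ P * diagonal l * Pᵀ = diagonal (l ∘ σ) := by
  have hPt : (σ.toPEquiv.toMatrix : Matrix (Fin 3) (Fin 3) ℝ)ᵀ = σ.symm.toPEquiv.toMatrix := by
    rw [← PEquiv.toMatrix_symm, Equiv.toPEquiv_symm]
  refine ⟨σ.toPEquiv.toMatrix, ?_, ?_⟩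
  · rw [hPt, ← PEquiv.toMatrix_trans, ← Equiv.toPEquiv_trans]
    simp
  · rw [hPt, PEquiv.toMatrix_toPEquiv_mul, PEquiv.mul_toMatrix_toPEquiv, Equiv.symm_symm]
    simp [Matrix.submatrix_submatrix]

end Aux

theorem stmt3 (X Y : Matrix (Fin 3) (Fin 3) ℝ)
    (hX : Xᵀ = X) (hXtr : X.trace = 0) (hY : Yᵀ = Y) (hYtr : Y.trace = 0) :
    (∃ k : Matrix (Fin 3) (Fin 3) ℝ, k * kᵀ = 1 ∧ k.det = 1 ∧ k * X * kᵀ = Y) ↔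
      (X * X).trace = (Y * Y).trace ∧ X.det = Y.det := by
  constructor
  · rintro ⟨k, hko, hkd, hky⟩
    constructor
    · rw [← hky, conj_sq' hko, conj_trace' hko]
    · rw [← hky, conj_det' hko]
  · rintro ⟨htr, hdet⟩
    obtain ⟨U, lx, hU, hXs⟩ := real_spectral' X hX
    obtain ⟨V, ly, hV, hYs⟩ := real_spectral' Y hY
    have hU' : Uᵀ * U = 1 := mul_eq_one_comm.mp hU
    -- invariants in terms of eigenvalues
    have h1x : lx 0 + lx 1 + lx 2 = 0 := by
      have h := conj_trace' (A := diagonal lx) hU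
      rw [← hXs, hXtr, trace_diagonal, Fin.sum_univ_three] at h
      exact h.symm
    have h1y : ly 0 + ly 1 + ly 2 = 0 := by
      have h := conj_trace' (A := diagonal ly) hV
      rw [← hYs, hYtr, trace_diagonal, Fin.sum_univ_three] at h
      exact h.symm
    have h2x : (X * X).trace = lx 0 * lx 0 + lx 1 * lx 1 + lx 2 * lx 2 := by
      have h := conj_trace' (A := diagonal lx * diagonal lx) hU
      rw [← conj_sq' hU, ← hXs, diagonal_mul_diagonal, trace_diagonal,
        Fin.sum_univ_three] at h
      exact h
    have h2y : (Y * Y).trace = ly 0 * ly 0 + ly 1 * ly 1 + ly 2 * ly 2 := by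
      have h := conj_trace' (A := diagonal ly * diagonal ly) hV
      rw [← conj_sq' hV, ← hYs, diagonal_mul_diagonal, trace_diagonal,
        Fin.sum_univ_three] at h
      exact h
    have h3x : X.det = lx 0 * lx 1 * lx 2 := by
      have h := conj_det' (A := diagonal lx) hU
      rw [← hXs, det_diagonal, Fin.prod_univ_three] at h
      exact h
    have h3y : Y.det = ly 0 * ly 1 * ly 2 := by
      have h := conj_det' (A := diagonal ly) hV
      rw [← hYs, det_diagonal, Fin.prod_univ_three] at h
      exact h
    -- eigenvalues agree up to permutation
    obtain ⟨σ, hσ⟩ := exists_comp_perm' lx ly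
      (eigen_multiset_eq' lx ly h1x h1y (by rw [← h2x, ← h2y]; exact htr)
        (by rw [← h3x, ← h3y]; exact hdet))
    obtain ⟨P, hPo, hPD⟩ := perm_matrix_conj' σ lx
    rw [hσ] at hPD
    -- sign-fixing matrix
    set c : ℝ := (V * P * Uᵀ).det with hc_def
    have hk0 : (V * P * Uᵀ) * (V * P * Uᵀ)ᵀ = 1 := orth_mul' (orth_mul' hV hPo) (orth_transpose' hU)
    have hc : c * c = 1 := by
      have h := congrArg Matrix.det hk0
      rwa [det_mul, det_transpose, det_one] at h
    set S : Matrix (Fin 3) (Fin 3) ℝ := diagonal (fun i : Fin 3 => if i = 0 then c else 1)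
      with hS_def
    have hSt : Sᵀ = S := diagonal_transpose _
    have hS2 : S * S = 1 := by
      rw [hS_def, diagonal_mul_diagonal]
      have h : (fun i : Fin 3 => (if i = 0 then c else 1) * if i = 0 then c else 1)
          = fun _ => (1 : ℝ) := by
        funext i
        by_cases hi : i = 0 <;> simp [hi, hc]
      rw [h, diagonal_one]
    have hSdet : S.det = c := by
      rw [hS_def, det_diagonal, Fin.prod_univ_three]
      simp [show (1 : Fin 3) ≠ 0 by decide, show (2 : Fin 3) ≠ 0 by decide]
    have hSD : S * diagonal lx * S = diagonal lx := by
      rw [hS_def, diagonal_mul_diagonal, diagonal_mul_diagonal]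
      have h : (fun i : Fin 3 => (if i = 0 then c else 1) * lx i * if i = 0 then c else 1)
          = lx := by
        funext i
        by_cases hi : i = 0
        · simp only [hi, eq_self_iff_true, if_true]
          linear_combination lx 0 * hc
        · simp [hi]
      rw [h]
    have hSo : S * Sᵀ = 1 := by rw [hSt]; exact hS2
    refine ⟨V * P * S * Uᵀ, orth_mul' (orth_mul' (orth_mul' hV hPo) hSo) (orth_transpose' hU),
      ?_, ?_⟩
    · have hck : c = V.det * P.det * Uᵀ.det := by rw [hc_def, det_mul, det_mul]
      rw [det_mul, det_mul, det_mul, hSdet]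
      linear_combination c * hck.symm + hc
    · rw [hXs, hYs]
      simp only [transpose_mul, transpose_transpose, hSt, Matrix.mul_assoc]
      rw [← Matrix.mul_assoc Uᵀ U, hU', Matrix.one_mul]
      rw [← Matrix.mul_assoc Uᵀ U, hU', Matrix.one_mul]
      rw [← Matrix.mul_assoc S (diagonal lx), ← Matrix.mul_assoc (S * diagonal lx) S, hSD]
      rw [← Matrix.mul_assoc P (diagonal lx), ← Matrix.mul_assoc (P * diagonal lx) Pᵀ, hPD]
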